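/- arXiv:1806.02236 — 2 statements merged into one kernel-verified Lean document; each statement's English description precedes it below -/
import Mathlib

section
/- If a, b, c ∈ ℤ² are not collinear and the triangle conv{a,b,c} contains no lattice point other than a, b and c, then |det(b−a, c−a)| = 1, i.e., the triangle has Euclidean area 1/2 (normalized area 1). Consequently, every fine triangulation of a lattice polygon is unimodular. -/
open Set MeasureTheory

noncomputable section

/-- Points of `ℝ²` with integer coordinates. -/
def latticePts2 : Set (Fin 2 → ℝ) := {x | ∀ i, ∃ n : ℤ, x i = (n : ℝ)}

/-- Cast a point of `ℤ²` into `ℝ²`. -/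
def c2 (a : Fin 2 → ℤ) : Fin 2 → ℝ := fun i => (a i : ℝ)

/-- A lattice polygon: a `2`-dimensional convex hull of finitely many points of `ℤ²`. -/
def IsLatticePolygon (P : Set (Fin 2 → ℝ)) : Prop :=
  (∃ F : Set (Fin 2 → ℝ), F.Finite ∧ F ⊆ latticePts2 ∧ P = convexHull ℝ F) ∧
  (interior P).Nonempty

/-- `T` is a triangulation of the lattice polygon `P`. -/
def IsTriangulationOf2 (P : Set (Fin 2 → ℝ)) (T : Set (Finset (Fin 2 → ℝ))) : Prop :=
  T.Finite ∧
  (∀ S ∈ T, (S : Set (Fin 2 → ℝ)) ⊆ P ∩ latticePts2 ∧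
    AffineIndependent ℝ (fun v : (S : Set (Fin 2 → ℝ)) => (v : Fin 2 → ℝ))) ∧
  (⋃ S ∈ T, convexHull ℝ (S : Set (Fin 2 → ℝ))) = P ∧
  (∀ S ∈ T, ∀ S' : Finset (Fin 2 → ℝ), S' ⊆ S → S' ∈ T) ∧
  (∀ S ∈ T, ∀ S' ∈ T, ∃ F : Finset (Fin 2 → ℝ), F ∈ T ∧ F ⊆ S ∧ F ⊆ S' ∧
    convexHull ℝ (S : Set (Fin 2 → ℝ)) ∩ convexHull ℝ (S' : Set (Fin 2 → ℝ)) =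
      convexHull ℝ (F : Set (Fin 2 → ℝ)))

/-- `T` is fine: every lattice point of `P` is a vertex of some triangle of `T`. -/
def IsFine2 (P : Set (Fin 2 → ℝ)) (T : Set (Finset (Fin 2 → ℝ))) : Prop :=
  ∀ x ∈ P ∩ latticePts2, ∃ S ∈ T, x ∈ S

/-- `T` is unimodular: every triangle of `T` has Euclidean area `1/2`. -/
def IsUnimodular2 (T : Set (Finset (Fin 2 → ℝ))) : Prop :=
  ∀ S ∈ T, S.card = 3 →
    volume (convexHull ℝ (S : Set (Fin 2 → ℝ))) = ENNReal.ofReal (1 / 2)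


lemma null_hyperplane (f : (Fin 2 → ℝ) →ₗ[ℝ] ℝ) (hf : f ≠ 0) (r : ℝ) :
    volume {x : Fin 2 → ℝ | f x = r} = 0 := by
  obtain ⟨y, hy⟩ : ∃ y, f y ≠ 0 := by
    by_contra h; push_neg at h; exact hf (LinearMap.ext h)
  set x₀ : Fin 2 → ℝ := (r / f y) • y with hx₀
  have hfx₀ : f x₀ = r := by
    rw [hx₀, LinearMap.map_smul, smul_eq_mul, div_mul_cancel₀ _ hy]
  have hset : {x : Fin 2 → ℝ | f x = r}
      = (AffineSubspace.mk' x₀ (LinearMap.ker f) : Set (Fin 2 → ℝ)) := by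
    ext z
    rw [Set.mem_setOf_eq, SetLike.mem_coe, AffineSubspace.mem_mk']
    rw [show (z -ᵥ x₀ ∈ LinearMap.ker f) ↔ ∃ v ∈ LinearMap.ker f, z = v +ᵥ x₀ from
      ⟨fun h => ⟨_, h, (vsub_vadd z x₀).symm⟩, fun ⟨v, hv, e⟩ => by rw [e, vadd_vsub]; exact hv⟩]
    constructor
    · intro hz
      exact ⟨z - x₀, by simp [LinearMap.mem_ker, map_sub, hz, hfx₀], by simp⟩
    · rintro ⟨v, hv, rfl⟩
      simp only [vadd_eq_add, map_add, LinearMap.mem_ker.mp hv, hfx₀, zero_add]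
  rw [hset]
  apply MeasureTheory.Measure.addHaar_affineSubspace
  intro h
  have h2 : (AffineSubspace.mk' x₀ (LinearMap.ker f)).direction = ⊤ := by rw [h]; simp
  rw [AffineSubspace.direction_mk'] at h2
  exact hf (LinearMap.ker_eq_top.mp h2)

def stdTri : Set (Fin 2 → ℝ) := {x | 0 ≤ x 0 ∧ 0 ≤ x 1 ∧ x 0 + x 1 ≤ 1}
def stdTriO : Set (Fin 2 → ℝ) := {x | 0 < x 0 ∧ 0 < x 1 ∧ x 0 + x 1 < 1}

lemma volume_stdTriO : volume stdTriO = ENNReal.ofReal (1 / 2) := by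
  have hmp := MeasureTheory.volume_preserving_piFinTwo (fun _ : Fin 2 => ℝ)
  have hregion : stdTriO = (MeasurableEquiv.piFinTwo (fun _ : Fin 2 => ℝ)) ⁻¹'
      (regionBetween (fun _ => (0:ℝ)) (fun x => 1 - x) (Ioo 0 1)) := by
    ext x
    simp only [stdTriO, mem_setOf_eq, mem_preimage, MeasurableEquiv.piFinTwo_apply,
      regionBetween, mem_Ioo, mem_setOf_eq]
    constructor
    · rintro ⟨h0, h1, hs⟩; exact ⟨⟨h0, by linarith⟩, h1, by linarith⟩
    · rintro ⟨⟨h0, h0'⟩, h1, hs⟩; exact ⟨h0, h1, by linarith⟩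
  have hmeas : MeasurableSet (regionBetween (fun _ => (0:ℝ)) (fun x => 1 - x) (Ioo 0 1)) :=
    measurableSet_regionBetween measurable_const (by fun_prop) measurableSet_Ioo
  rw [hregion, hmp.measure_preimage hmeas.nullMeasurableSet]
  have hif : IntegrableOn (fun _ : ℝ => (0:ℝ)) (Ioo 0 1) volume :=
    continuous_const.integrableOn_Icc.mono_set Ioo_subset_Icc_self
  have hig : IntegrableOn (fun x : ℝ => 1 - x) (Ioo 0 1) volume :=
    (continuous_const.sub continuous_id).integrableOn_Icc.mono_set Ioo_subset_Icc_self
  rw [Measure.volume_eq_prod ℝ ℝ, volume_regionBetween_eq_integral hif hig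
    measurableSet_Ioo (fun x hx => by simp only [mem_Ioo] at hx; linarith [hx.2])]
  congr 1
  rw [show (fun x : ℝ => 1 - x) - (fun _ => (0:ℝ)) = fun x => 1 - x by funext x; simp]
  rw [← MeasureTheory.integral_Ioc_eq_integral_Ioo,
    ← intervalIntegral.integral_of_le (by norm_num : (0:ℝ) ≤ 1)]
  rw [intervalIntegral.integral_sub intervalIntegrable_const intervalIntegral.intervalIntegrable_id]
  simp [integral_id]
  norm_num

lemma combo_mem {A B C : Fin 2 → ℝ} {w1 w2 w3 : ℝ} (h1 : 0 ≤ w1) (h2 : 0 ≤ w2) (h3 : 0 ≤ w3)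
    (hs : w1 + w2 + w3 = 1) :
    w1 • A + w2 • B + w3 • C ∈ convexHull ℝ ({A, B, C} : Set (Fin 2 → ℝ)) := by
  have := Finset.centerMass_mem_convexHull (Finset.univ : Finset (Fin 3))
    (w := ![w1, w2, w3]) (z := ![A, B, C]) (s := ({A, B, C} : Set (Fin 2 → ℝ)))
    (fun i _ => by fin_cases i <;> simpa)
    (by simp [Fin.sum_univ_three, hs])
    (fun i _ => by fin_cases i <;> simp [Set.mem_insert_iff])
  rw [Finset.centerMass] at this
  simpa [Fin.sum_univ_three, hs] using this

lemma convexHull_eq_stdTri :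
    convexHull ℝ ({0, Pi.single 0 1, Pi.single 1 1} : Set (Fin 2 → ℝ)) = stdTri := by
  apply Subset.antisymm
  · apply convexHull_min
    · rintro x (rfl | rfl | rfl) <;>
        simp [stdTri, Pi.single_apply]
    · rintro x ⟨hx0, hx1, hxs⟩ y ⟨hy0, hy1, hys⟩ a b ha hb hab
      refine ⟨?_, ?_, ?_⟩ <;> simp only [Pi.add_apply, Pi.smul_apply, smul_eq_mul] <;> nlinarith
  · rintro x ⟨hx0, hx1, hxs⟩
    have := combo_mem (A := (0 : Fin 2 → ℝ)) (B := Pi.single 0 1) (C := Pi.single 1 1)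
      (w1 := 1 - x 0 - x 1) (w2 := x 0) (w3 := x 1) (by linarith) hx0 hx1 (by ring)
    convert this using 1
    funext i
    fin_cases i <;> simp [Pi.single_apply]

lemma volume_stdTri : volume stdTri = ENNReal.ofReal (1 / 2) := by
  have hN0 := null_hyperplane (LinearMap.proj 0) (fun h => by
    simpa using LinearMap.congr_fun h (Pi.single 0 1)) 0
  have hN1 := null_hyperplane (LinearMap.proj 1) (fun h => by
    simpa using LinearMap.congr_fun h (Pi.single 1 1)) 0
  have hf2 : ((LinearMap.proj 0 : (Fin 2 → ℝ) →ₗ[ℝ] ℝ) + (LinearMap.proj 1 : (Fin 2 → ℝ) →ₗ[ℝ] ℝ)) ≠ 0 := by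
    intro h
    have h2 := LinearMap.congr_fun h (Pi.single 1 1)
    simp only [LinearMap.add_apply, LinearMap.proj_apply, LinearMap.zero_apply] at h2
    norm_num [Pi.single_apply] at h2
  have hN2 := null_hyperplane _ hf2 1
  have hsub : stdTri ⊆ stdTriO ∪ ({x : Fin 2 → ℝ | (LinearMap.proj 0 : ((i : Fin 2) → ℝ) →ₗ[ℝ] ℝ) x = 0}
      ∪ {x : Fin 2 → ℝ | (LinearMap.proj 1 : ((i : Fin 2) → ℝ) →ₗ[ℝ] ℝ) x = 0}
      ∪ {x : Fin 2 → ℝ | ((LinearMap.proj 0 : (Fin 2 → ℝ) →ₗ[ℝ] ℝ) + (LinearMap.proj 1 : (Fin 2 → ℝ) →ₗ[ℝ] ℝ)) x = 1}) := by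
    rintro x ⟨h0, h1, hs⟩
    rcases eq_or_lt_of_le h0 with e0 | l0
    · exact Or.inr (Or.inl (Or.inl e0.symm))
    rcases eq_or_lt_of_le h1 with e1 | l1
    · exact Or.inr (Or.inl (Or.inr e1.symm))
    rcases eq_or_lt_of_le hs with es | ls
    · exact Or.inr (Or.inr (by simpa using es))
    · exact Or.inl ⟨l0, l1, ls⟩
  have hO : stdTriO ⊆ stdTri := fun x ⟨h0, h1, hs⟩ => ⟨le_of_lt h0, le_of_lt h1, le_of_lt hs⟩
  refine le_antisymm ?_ ?_
  · calc volume stdTri ≤ volume (stdTriO ∪ _) := measure_mono hsub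
      _ ≤ volume stdTriO + volume _ := measure_union_le _ _
      _ = volume stdTriO := by
          rw [measure_union_null (measure_union_null hN0 hN1) hN2, add_zero]
      _ = ENNReal.ofReal (1 / 2) := volume_stdTriO
  · rw [← volume_stdTriO]; exact measure_mono hO

lemma triVol (A U V : Fin 2 → ℝ) :
    volume (convexHull ℝ ({A, A + U, A + V} : Set (Fin 2 → ℝ)))
      = ENNReal.ofReal |U 0 * V 1 - U 1 * V 0| * ENNReal.ofReal (1 / 2) := by
  set M : Matrix (Fin 2) (Fin 2) ℝ := Matrix.of ![![U 0, V 0], ![U 1, V 1]] with hM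
  set L := Matrix.toLin' M with hL
  have hLe0 : L (Pi.single 0 1) = U := by
    rw [hL, Matrix.toLin'_apply, Matrix.mulVec_single_one]
    funext i; fin_cases i <;> simp [hM]
  have hLe1 : L (Pi.single 1 1) = V := by
    rw [hL, Matrix.toLin'_apply, Matrix.mulVec_single_one]
    funext i; fin_cases i <;> simp [hM]
  have himg : ({A, A + U, A + V} : Set (Fin 2 → ℝ))
      = (fun x => A + L x) '' ({0, Pi.single 0 1, Pi.single 1 1}) := by
    rw [Set.image_insert_eq, Set.image_insert_eq, Set.image_singleton, map_zero, add_zero,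
      hLe0, hLe1]
  have haff : ∀ s : Set (Fin 2 → ℝ), convexHull ℝ ((fun x => A + L x) '' s)
      = (fun x => A + L x) '' convexHull ℝ s := by
    intro s
    have : (fun x => A + L x) = (AffineMap.const ℝ (Fin 2 → ℝ) A + L.toAffineMap : _) := by
      funext x; simp [AffineMap.const_apply]
    rw [this, ← AffineMap.image_convexHull]
  rw [himg, haff, convexHull_eq_stdTri]
  have : (fun x => A + L x) '' stdTri = (fun x => A + x) '' (L '' stdTri) := by
    rw [Set.image_image]
  rw [this, Set.image_add_left, measure_preimage_add,
    MeasureTheory.Measure.addHaar_image_linearMap,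
    LinearMap.det_toLin', Matrix.det_fin_two, volume_stdTri]
  congr 2
  simp only [hM, Matrix.of_apply, Matrix.cons_val', Matrix.cons_val_zero, Matrix.cons_val_one,
    Matrix.head_cons, Matrix.head_fin_const]
  ring

lemma det_ne_zero_of_not_collinear (a b c : Fin 2 → ℤ)
    (hcol : ¬ Collinear ℝ ({c2 a, c2 b, c2 c} : Set (Fin 2 → ℝ))) :
    ((b 0 - a 0) * (c 1 - a 1) - (b 1 - a 1) * (c 0 - a 0) : ℤ) ≠ 0 := by
  intro h0
  apply hcol
  have h0R : ((b 0 : ℝ) - a 0) * ((c 1 : ℝ) - a 1) - ((b 1 : ℝ) - a 1) * ((c 0 : ℝ) - a 0) = 0 := by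
    exact_mod_cast congrArg (fun z : ℤ => (z : ℝ)) h0
  rw [collinear_iff_of_mem (Set.mem_insert (c2 a) _)]
  by_cases hu : (b 0 : ℝ) - a 0 = 0 ∧ (b 1 : ℝ) - a 1 = 0
  · refine ⟨c2 c - c2 a, ?_⟩
    rintro p (rfl | rfl | rfl)
    · exact ⟨0, by simp⟩
    · refine ⟨0, ?_⟩
      funext i
      fin_cases i <;> simp [c2] <;>
        [exact_mod_cast (by linarith [hu.1] : (b 0 : ℝ) = (a 0 : ℝ));
         exact_mod_cast (by linarith [hu.2] : (b 1 : ℝ) = (a 1 : ℝ))]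
    · exact ⟨1, by funext i; simp [c2]⟩
  · refine ⟨c2 b - c2 a, ?_⟩
    have hr : ∃ r : ℝ, (c 0 : ℝ) - a 0 = r * ((b 0 : ℝ) - a 0) ∧
        (c 1 : ℝ) - a 1 = r * ((b 1 : ℝ) - a 1) := by
      rw [not_and_or] at hu
      rcases hu with hu0 | hu1
      · refine ⟨((c 0 : ℝ) - a 0) / ((b 0 : ℝ) - a 0), ?_, ?_⟩
        · field_simp
        · field_simp
          linear_combination h0R
      · refine ⟨((c 1 : ℝ) - a 1) / ((b 1 : ℝ) - a 1), ?_, ?_⟩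
        · field_simp
          linear_combination -h0R
        · field_simp
    obtain ⟨r, hr0, hr1⟩ := hr
    rintro p (rfl | rfl | rfl)
    · exact ⟨0, by simp⟩
    · exact ⟨1, by funext i; simp [c2]⟩
    · refine ⟨r, ?_⟩
      funext i
      fin_cases i <;> simp [c2] <;> [linarith [hr0]; linarith [hr1]]

lemma key_dvd (a b c : Fin 2 → ℤ)
    (hcol : ¬ Collinear ℝ ({c2 a, c2 b, c2 c} : Set (Fin 2 → ℝ)))
    (hsub : convexHull ℝ ({c2 a, c2 b, c2 c} : Set (Fin 2 → ℝ)) ∩ latticePts2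
      ⊆ ({c2 a, c2 b, c2 c} : Set (Fin 2 → ℝ))) (w : Fin 2 → ℤ) :
    ((b 0 - a 0) * (c 1 - a 1) - (b 1 - a 1) * (c 0 - a 0))
        ∣ (w 0 * (c 1 - a 1) - w 1 * (c 0 - a 0)) ∧
    ((b 0 - a 0) * (c 1 - a 1) - (b 1 - a 1) * (c 0 - a 0))
        ∣ ((b 0 - a 0) * w 1 - (b 1 - a 1) * w 0) := by
  set d : ℤ := (b 0 - a 0) * (c 1 - a 1) - (b 1 - a 1) * (c 0 - a 0) with hd_def
  have hdz : d ≠ 0 := det_ne_zero_of_not_collinear a b c hcol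
  have hdR : (d : ℝ) ≠ 0 := Int.cast_ne_zero.mpr hdz
  set s : ℝ := ((w 0 * (c 1 - a 1) - w 1 * (c 0 - a 0) : ℤ) : ℝ) / (d : ℝ) with hs_def
  set t : ℝ := (((b 0 - a 0) * w 1 - (b 1 - a 1) * w 0 : ℤ) : ℝ) / (d : ℝ) with ht_def
  suffices h : (∃ m : ℤ, s = m) ∧ (∃ n : ℤ, t = n) by
    obtain ⟨⟨m, hm⟩, n, hn⟩ := h
    rw [hs_def] at hm
    rw [ht_def] at hn
    rw [div_eq_iff hdR] at hm hn
    constructor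
    · exact ⟨m, by exact_mod_cast hm.trans (mul_comm _ _)⟩
    · exact ⟨n, by exact_mod_cast hn.trans (mul_comm _ _)⟩
  have hdRexp : (d : ℝ) = ((b 0:ℝ) - a 0) * ((c 1:ℝ) - a 1) - ((b 1:ℝ) - a 1) * ((c 0:ℝ) - a 0) := by
    rw [hd_def]; push_cast; ring
  have hzero : ∀ α β : ℝ, α * ((b 0:ℝ) - a 0) + β * ((c 0:ℝ) - a 0) = 0 →
      α * ((b 1:ℝ) - a 1) + β * ((c 1:ℝ) - a 1) = 0 → α = 0 ∧ β = 0 := by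
    intro α β h0 h1
    constructor
    · have hα : α * (d:ℝ) = 0 := by
        rw [hdRexp]
        linear_combination (((c 1:ℝ) - a 1)) * h0 - (((c 0:ℝ) - a 0)) * h1
      exact (mul_eq_zero.mp hα).resolve_right hdR
    · have hβ : β * (d:ℝ) = 0 := by
        rw [hdRexp]
        linear_combination (((b 0:ℝ) - a 0)) * h1 - (((b 1:ℝ) - a 1)) * h0
      exact (mul_eq_zero.mp hβ).resolve_right hdR
  have hst : ∀ i : Fin 2, s * ((b i:ℝ) - a i) + t * ((c i:ℝ) - a i) = (w i : ℝ) := by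
    intro i
    rw [hs_def, ht_def]
    field_simp
    rw [hdRexp]
    fin_cases i <;> push_cast <;> ring
  have hmem : ∀ α β : ℝ, 0 ≤ α → 0 ≤ β → α + β ≤ 1 →
      (fun i => (a i : ℝ) + α * ((b i:ℝ) - a i) + β * ((c i:ℝ) - a i))
        ∈ convexHull ℝ ({c2 a, c2 b, c2 c} : Set (Fin 2 → ℝ)) := by
    intro α β h1 h2 h3
    have := combo_mem (A := c2 a) (B := c2 b) (C := c2 c)
      (w1 := 1 - α - β) (w2 := α) (w3 := β) (by linarith) h1 h2 (by ring)
    convert this using 1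
    funext i
    simp only [Pi.add_apply, Pi.smul_apply, smul_eq_mul, c2]
    ring
  set α : ℝ := Int.fract s with hα_def
  set β : ℝ := Int.fract t with hβ_def
  have hαs : α = s - ⌊s⌋ := rfl
  have hβt : β = t - ⌊t⌋ := rfl
  have hα0 : 0 ≤ α := Int.fract_nonneg s
  have hβ0 : 0 ≤ β := Int.fract_nonneg t
  have hα1 : α < 1 := Int.fract_lt_one s
  have hβ1 : β < 1 := Int.fract_lt_one t
  -- the candidate lattice point(s)
  have hcoordlat : ∀ i : Fin 2, α * ((b i:ℝ) - a i) + β * ((c i:ℝ) - a i)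
      = (w i : ℝ) - (⌊s⌋ : ℝ) * ((b i:ℝ) - a i) - (⌊t⌋ : ℝ) * ((c i:ℝ) - a i) := by
    intro i
    rw [hαs, hβt]
    linear_combination hst i
  rcases le_or_gt (α + β) 1 with hle | hgt
  · -- q = a + α u + β v is a lattice point in the triangle
    have hq : (fun i => (a i : ℝ) + α * ((b i:ℝ) - a i) + β * ((c i:ℝ) - a i))
        ∈ ({c2 a, c2 b, c2 c} : Set (Fin 2 → ℝ)) := by
      apply hsub
      refine ⟨hmem α β hα0 hβ0 hle, fun i => ⟨a i + (w i - ⌊s⌋ * (b i - a i) - ⌊t⌋ * (c i - a i)), ?_⟩⟩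
      push_cast
      linear_combination hcoordlat i
    have key : α = 0 ∧ β = 0 := by
      rcases hq with hq | hq | hq
      · refine hzero α β ?_ ?_ <;>
        · have := congrFun hq
          have h0 := this 0; have h1 := this 1
          simp only [c2] at h0 h1
          first
          | linarith [h0]
          | linarith [h1]
      · exfalso
        have := congrFun hq
        have h0 := this 0; have h1 := this 1
        simp only [c2] at h0 h1
        have := hzero (α - 1) β (by linarith) (by linarith)
        linarith [this.1]
      · exfalso
        have := congrFun hq
        have h0 := this 0; have h1 := this 1
        simp only [c2] at h0 h1
        have := hzero α (β - 1) (by linarith) (by linarith)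
        linarith [this.2]
    constructor
    · exact ⟨⌊s⌋, by rw [← sub_eq_zero]; rw [hαs] at key; linarith [key.1]⟩
    · exact ⟨⌊t⌋, by rw [← sub_eq_zero]; rw [hβt] at key; linarith [key.2]⟩
  · -- q2 = a + (1-α) u + (1-β) v is a lattice point in the triangle: contradiction
    exfalso
    have hq : (fun i => (a i : ℝ) + (1-α) * ((b i:ℝ) - a i) + (1-β) * ((c i:ℝ) - a i))
        ∈ ({c2 a, c2 b, c2 c} : Set (Fin 2 → ℝ)) := by
      apply hsub
      refine ⟨hmem (1-α) (1-β) (by linarith) (by linarith) (by linarith), fun i =>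
        ⟨b i + c i - a i - (w i - ⌊s⌋ * (b i - a i) - ⌊t⌋ * (c i - a i)), ?_⟩⟩
      push_cast
      linear_combination - hcoordlat i
    rcases hq with hq | hq | hq
    · have := congrFun hq
      have h0 := this 0; have h1 := this 1
      simp only [c2] at h0 h1
      have := hzero (1-α) (1-β) (by linarith) (by linarith)
      linarith [this.1]
    · have := congrFun hq
      have h0 := this 0; have h1 := this 1
      simp only [c2] at h0 h1
      have := hzero (-α) (1-β) (by linarith) (by linarith)
      linarith [this.2]
    · have := congrFun hq
      have h0 := this 0; have h1 := this 1
      simp only [c2] at h0 h1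
      have := hzero (1-α) (-β) (by linarith) (by linarith)
      linarith [this.1]

lemma dvd_det_one {d u0 u1 v0 v1 : ℤ} (hd : d = u0 * v1 - u1 * v0) (hdz : d ≠ 0)
    (h1 : d ∣ v1) (h2 : d ∣ u1) (h3 : d ∣ v0) (h4 : d ∣ u0) : d.natAbs = 1 := by
  obtain ⟨l1, hl1⟩ := h1
  obtain ⟨k1, hk1⟩ := h2
  obtain ⟨l0, hl0⟩ := h3
  obtain ⟨k0, hk0⟩ := h4
  have hdd : d * 1 = d * (d * (k0 * l1 - k1 * l0)) := by
    nth_rewrite 1 [hd]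
    rw [hk0, hk1, hl0, hl1]; ring
  have hone : (1 : ℤ) = d * (k0 * l1 - k1 * l0) := mul_left_cancel₀ hdz hdd
  simpa using Nat.dvd_one.mp (Int.natAbs_dvd_natAbs.mpr ⟨_, hone⟩)

lemma det_natAbs_eq_one (a b c : Fin 2 → ℤ)
    (hcol : ¬ Collinear ℝ ({c2 a, c2 b, c2 c} : Set (Fin 2 → ℝ)))
    (hsub : convexHull ℝ ({c2 a, c2 b, c2 c} : Set (Fin 2 → ℝ)) ∩ latticePts2
      ⊆ ({c2 a, c2 b, c2 c} : Set (Fin 2 → ℝ))) :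
    ((b 0 - a 0) * (c 1 - a 1) - (b 1 - a 1) * (c 0 - a 0)).natAbs = 1 := by
  obtain ⟨h1, h2⟩ := key_dvd a b c hcol hsub ![1, 0]
  obtain ⟨h3, h4⟩ := key_dvd a b c hcol hsub ![0, 1]
  simp only [Matrix.cons_val_zero, Matrix.cons_val_one, Matrix.head_cons, one_mul, zero_mul,
    mul_one, mul_zero, sub_zero, zero_sub] at h1 h2 h3 h4
  rw [dvd_neg] at h2 h3
  exact dvd_det_one rfl (det_ne_zero_of_not_collinear a b c hcol) h1 h2 h3 h4

lemma vertex_extreme {S : Finset (Fin 2 → ℝ)}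
    (hai : AffineIndependent ℝ (fun v : (S : Set (Fin 2 → ℝ)) => (v : Fin 2 → ℝ)))
    {x : Fin 2 → ℝ} (hx : x ∈ S) {F : Finset (Fin 2 → ℝ)} (hF : F ⊆ S)
    (hxF : x ∈ convexHull ℝ (F : Set (Fin 2 → ℝ))) : x ∈ F := by
  by_contra h
  have hFsub : (F : Set (Fin 2 → ℝ)) ⊆ ((S : Set (Fin 2 → ℝ)) \ {x}) := fun y hy =>
    ⟨hF hy, fun e => h ((Set.mem_singleton_iff.mp e) ▸ hy)⟩
  have himg : (fun v : (S : Set (Fin 2 → ℝ)) => (v : Fin 2 → ℝ)) ''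
      (Set.univ \ {(⟨x, hx⟩ : (S : Set (Fin 2 → ℝ)))}) = (S : Set (Fin 2 → ℝ)) \ {x} := by
    ext y
    constructor
    · rintro ⟨⟨y', hy'⟩, ⟨-, hne⟩, rfl⟩
      refine ⟨hy', fun e => hne ?_⟩
      simp only [Set.mem_singleton_iff] at e ⊢
      exact Subtype.ext e
    · rintro ⟨hyS, hne⟩
      exact ⟨⟨y, hyS⟩, ⟨trivial, fun e => hne (by simpa using congrArg Subtype.val e)⟩, rfl⟩
  have hnot := hai.notMem_affineSpan_diff (⟨x, hx⟩ : (S : Set (Fin 2 → ℝ))) Set.univ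
  apply hnot
  rw [himg]
  exact (convexHull_subset_affineSpan _) ((convexHull_mono hFsub) hxF)


lemma tri_full (a b c : Fin 2 → ℤ) (hcol : ¬ Collinear ℝ ({c2 a, c2 b, c2 c} : Set (Fin 2 → ℝ)))
    (hsub : convexHull ℝ ({c2 a, c2 b, c2 c} : Set (Fin 2 → ℝ)) ∩ latticePts2
      ⊆ ({c2 a, c2 b, c2 c} : Set (Fin 2 → ℝ))) :
    ((b 0 - a 0) * (c 1 - a 1) - (b 1 - a 1) * (c 0 - a 0)).natAbs = 1 ∧
      volume (convexHull ℝ ({c2 a, c2 b, c2 c} : Set (Fin 2 → ℝ))) = ENNReal.ofReal (1 / 2) := by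
  have hna := det_natAbs_eq_one a b c hcol hsub
  refine ⟨hna, ?_⟩
  have hset : ({c2 a, c2 b, c2 c} : Set (Fin 2 → ℝ))
      = {c2 a, c2 a + (c2 b - c2 a), c2 a + (c2 c - c2 a)} := by
    rw [add_sub_cancel, add_sub_cancel]
  rw [hset, triVol]
  have habsZ : |(b 0 - a 0) * (c 1 - a 1) - (b 1 - a 1) * (c 0 - a 0)| = 1 := by
    rw [Int.abs_eq_natAbs, hna]; rfl
  have habs : |(c2 b - c2 a) 0 * (c2 c - c2 a) 1 - (c2 b - c2 a) 1 * (c2 c - c2 a) 0| = 1 := by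
    have : ((c2 b - c2 a) 0 * (c2 c - c2 a) 1 - (c2 b - c2 a) 1 * (c2 c - c2 a) 0 : ℝ)
        = (((b 0 - a 0) * (c 1 - a 1) - (b 1 - a 1) * (c 0 - a 0) : ℤ) : ℝ) := by
      simp only [Pi.sub_apply, c2]; push_cast; ring
    rw [this, ← Int.cast_abs, habsZ]
    norm_num
  rw [habs, ENNReal.ofReal_one, one_mul]

theorem stmt6 :
    (∀ a b c : Fin 2 → ℤ, ¬ Collinear ℝ {c2 a, c2 b, c2 c} →
      convexHull ℝ {c2 a, c2 b, c2 c} ∩ latticePts2 ⊆ {c2 a, c2 b, c2 c} →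
      ((b 0 - a 0) * (c 1 - a 1) - (b 1 - a 1) * (c 0 - a 0)).natAbs = 1 ∧
        volume (convexHull ℝ {c2 a, c2 b, c2 c}) = ENNReal.ofReal (1 / 2)) ∧
    (∀ (P : Set (Fin 2 → ℝ)) (T : Set (Finset (Fin 2 → ℝ))),
      IsLatticePolygon P → IsTriangulationOf2 P T → IsFine2 P T → IsUnimodular2 T) := by
  constructor
  · exact tri_full
  · rintro P T - ⟨hTfin, hmem, hunion, hdown, hinter⟩ hfine S hS hcard
    obtain ⟨hSP, hSai⟩ := hmem S hS
    obtain ⟨x, y, z, hxy, hxz, hyz, hS3⟩ := Finset.card_eq_three.mp hcard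
    have hsetS : (S : Set (Fin 2 → ℝ)) = {x, y, z} := by rw [hS3]; simp
    -- lattice coordinates
    have hxlat : x ∈ latticePts2 := (hSP (by rw [hsetS]; exact Set.mem_insert _ _)).2
    have hylat : y ∈ latticePts2 := (hSP (by rw [hsetS]; right; exact Set.mem_insert _ _)).2
    have hzlat : z ∈ latticePts2 := (hSP (by rw [hsetS]; right; right; rfl)).2
    set a : Fin 2 → ℤ := fun i => (hxlat i).choose with ha_def
    set b : Fin 2 → ℤ := fun i => (hylat i).choose with hb_def
    set c : Fin 2 → ℤ := fun i => (hzlat i).choose with hc_def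
    have hca : c2 a = x := by funext i; exact ((hxlat i).choose_spec).symm
    have hcb : c2 b = y := by funext i; exact ((hylat i).choose_spec).symm
    have hcc : c2 c = z := by funext i; exact ((hzlat i).choose_spec).symm
    -- not collinear
    have hcol : ¬ Collinear ℝ ({c2 a, c2 b, c2 c} : Set (Fin 2 → ℝ)) := by
      rw [hca, hcb, hcc]
      rw [← affineIndependent_iff_not_collinear_set]
      have hf : Function.Injective (fun i : Fin 3 =>
          (⟨![x, y, z] i, by fin_cases i <;> simp [hsetS]⟩ : (S : Set (Fin 2 → ℝ)))) := by
        intro i j hij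
        have := congrArg Subtype.val hij
        fin_cases i <;> fin_cases j <;> simp_all
      have := hSai.comp_embedding ⟨_, hf⟩
      convert this using 1
      all_goals rfl
    -- no extra lattice points
    have hsub : convexHull ℝ ({c2 a, c2 b, c2 c} : Set (Fin 2 → ℝ)) ∩ latticePts2
        ⊆ ({c2 a, c2 b, c2 c} : Set (Fin 2 → ℝ)) := by
      rw [hca, hcb, hcc, ← hsetS]
      rintro p ⟨hp1, hp2⟩
      have hpP : p ∈ P := by
        rw [← hunion]
        exact Set.mem_biUnion hS hp1
      obtain ⟨S', hS', hpS'⟩ := hfine p ⟨hpP, hp2⟩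
      obtain ⟨F, hFT, hFS, hFS', hinterEq⟩ := hinter S hS S' hS'
      have hpF : p ∈ convexHull ℝ (F : Set (Fin 2 → ℝ)) := by
        rw [← hinterEq]
        exact ⟨hp1, subset_convexHull ℝ _ hpS'⟩
      exact Finset.mem_coe.mpr (hFS (vertex_extreme (hmem S' hS').2 hpS' hFS' hpF))
    have := (tri_full a b c hcol hsub).2
    rwa [hca, hcb, hcc, ← hsetS] at this
end
end

section
/- (Correctness of the vertex-removal algorithm.) Let P ⊆ Q be 3-dimensional canonical subpolytopes of 4Δ₃ with P ≠ Q. Then Q has a vertex v with v ∉ P such that the polytope Q_v := conv((Q ∩ ℤ³) \ {v}) satisfies P ⊆ Q_v and (1,1,1) ∈ int(Q_v); in particular Q_v is again a canonical subpolytope of 4Δ₃. Consequently, every 3-dimensional canonical subpolytope of 4Δ₃ is obtained from 4Δ₃ by a finite sequence of such vertex removals, each of which preserves the property that (1,1,1) is an interior point. -/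
open Set MeasureTheory

noncomputable section

/-- Points of `ℝ³` with integer coordinates. -/
def latticePts : Set (Fin 3 → ℝ) := {x | ∀ i, ∃ n : ℤ, x i = (n : ℝ)}

/-- The point `(1,1,1)`. -/
def pOne : Fin 3 → ℝ := ![1, 1, 1]

/-- The tetrahedron `4Δ₃ = conv{(0,0,0),(4,0,0),(0,4,0),(0,0,4)}`. -/
def Delta4 : Set (Fin 3 → ℝ) :=
  convexHull ℝ {![0, 0, 0], ![4, 0, 0], ![0, 4, 0], ![0, 0, 4]}

/-- A subpolytope of `4Δ₃`: a lattice polytope `P ⊆ 4Δ₃` with `P = conv(P ∩ ℤ³)`. -/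
def IsSubpolytope (P : Set (Fin 3 → ℝ)) : Prop :=
  P ⊆ Delta4 ∧ P = convexHull ℝ (P ∩ latticePts)

/-- A canonical subpolytope of `4Δ₃`: a subpolytope with `(1,1,1)` in its interior
(this forces it to be `3`-dimensional). -/
def IsCanonicalSub (P : Set (Fin 3 → ℝ)) : Prop :=
  IsSubpolytope P ∧ pOne ∈ interior P

/-- The standard inner product on `ℝⁿ`. -/
def dotp {n : ℕ} (a x : Fin n → ℝ) : ℝ := ∑ i, a i * x i

/-- Equivalence of subsets of `ℝ³` under the group of affine symmetries of `4Δ₃`. -/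
def SymEquiv (P Q : Set (Fin 3 → ℝ)) : Prop :=
  ∃ g : (Fin 3 → ℝ) ≃ᵃ[ℝ] (Fin 3 → ℝ), g '' Delta4 = Delta4 ∧ g '' P = Q

/-- One step of the vertex-removal algorithm: remove a vertex `v` of `Q` and take the
convex hull of the remaining lattice points, provided `(1,1,1)` stays interior. -/
def RemoveStep (Q Q' : Set (Fin 3 → ℝ)) : Prop :=
  ∃ v ∈ Set.extremePoints ℝ Q,
    Q' = convexHull ℝ ((Q ∩ latticePts) \ {v}) ∧ pOne ∈ interior Q'

/-! ### Auxiliary lemmas -/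

lemma delta4_convex : Convex ℝ Delta4 := convex_convexHull ℝ _

lemma delta4_subset_box : Delta4 ⊆ Set.pi univ (fun _ => Icc (0:ℝ) 4) := by
  apply convexHull_min _ (convex_pi fun _ _ => convex_Icc 0 4)
  intro x hx
  simp only [Set.mem_insert_iff, Set.mem_singleton_iff] at hx
  rcases hx with rfl | rfl | rfl | rfl <;>
    · intro i _
      fin_cases i <;> constructor <;> norm_num

lemma lat_finite {Q : Set (Fin 3 → ℝ)} (hQ : Q ⊆ Delta4) : (Q ∩ latticePts).Finite := by
  apply Set.Finite.subset (Set.Finite.image (f := fun z : Fin 3 → ℤ => fun i => ((z i : ℝ)))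
    (Set.Finite.pi fun _ => Set.finite_Icc (0:ℤ) 4))
  rintro x ⟨hxQ, hxl⟩
  choose n hn using hxl
  refine ⟨n, ?_, ?_⟩
  · intro i _
    have hbox := delta4_subset_box (hQ hxQ) i (mem_univ i)
    rw [hn i] at hbox
    constructor
    · exact_mod_cast hbox.1
    · exact_mod_cast hbox.2
  · funext i; exact (hn i).symm

lemma pOne_lat : pOne ∈ latticePts := by
  intro i
  fin_cases i <;> exact ⟨1, by norm_num [pOne]⟩

lemma keyLemma (P Q : Set (Fin 3 → ℝ)) (hP : IsCanonicalSub P) (hQ : IsCanonicalSub Q)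
    (hPQ : P ⊆ Q) (hne : P ≠ Q) :
    ∃ v ∈ Set.extremePoints ℝ Q, v ∉ P ∧
      P ⊆ convexHull ℝ ((Q ∩ latticePts) \ {v}) ∧
      pOne ∈ interior (convexHull ℝ ((Q ∩ latticePts) \ {v})) ∧
      IsCanonicalSub (convexHull ℝ ((Q ∩ latticePts) \ {v})) := by
  have hQconv : Convex ℝ Q := by rw [hQ.1.2]; exact convex_convexHull ℝ _
  have hPconv : Convex ℝ P := by rw [hP.1.2]; exact convex_convexHull ℝ _
  have hQfin : (Q ∩ latticePts).Finite := lat_finite hQ.1.1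
  have hQcomp : IsCompact Q := by rw [hQ.1.2]; exact hQfin.isCompact_convexHull ℝ
  have hPcomp : IsCompact P := by
    rw [hP.1.2]; exact (lat_finite hP.1.1).isCompact_convexHull ℝ
  -- find an extreme point of Q not in P
  obtain ⟨v, hv, hvP⟩ : ∃ v ∈ Set.extremePoints ℝ Q, v ∉ P := by
    by_contra h
    push_neg at h
    have h1 : Q ⊆ P := by
      have hKM := closure_convexHull_extremePoints hQcomp hQconv
      rw [← hKM]
      calc closure (convexHull ℝ (Set.extremePoints ℝ Q))
          ⊆ closure P := closure_mono (convexHull_min h hPconv)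
        _ = P := hPcomp.isClosed.closure_eq
    exact hne (Set.Subset.antisymm hPQ h1)
  have hvlat : v ∈ Q ∩ latticePts := by
    have hv' := hv
    rw [hQ.1.2] at hv'
    exact extremePoints_convexHull_subset hv'
  refine ⟨v, hv, hvP, ?_, ?_, ?_⟩
  · -- P ⊆ Q'
    nth_rewrite 1 [hP.1.2]
    apply convexHull_mono
    rintro x ⟨hxP, hxl⟩
    exact ⟨⟨hPQ hxP, hxl⟩, fun hx => hvP (hx ▸ hxP)⟩
  · -- interior
    have hsub : P ⊆ convexHull ℝ ((Q ∩ latticePts) \ {v}) := by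
      nth_rewrite 1 [hP.1.2]
      apply convexHull_mono
      rintro x ⟨hxP, hxl⟩
      exact ⟨⟨hPQ hxP, hxl⟩, fun hx => hvP (hx ▸ hxP)⟩
    exact interior_mono hsub hP.2
  · -- canonical
    have hsub : P ⊆ convexHull ℝ ((Q ∩ latticePts) \ {v}) := by
      nth_rewrite 1 [hP.1.2]
      apply convexHull_mono
      rintro x ⟨hxP, hxl⟩
      exact ⟨⟨hPQ hxP, hxl⟩, fun hx => hvP (hx ▸ hxP)⟩
    refine ⟨⟨?_, ?_⟩, interior_mono hsub hP.2⟩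
    · exact convexHull_min (fun x hx => hQ.1.1 hx.1.1) delta4_convex
    · apply Set.Subset.antisymm
      · apply convexHull_mono
        intro x hx
        exact ⟨subset_convexHull ℝ _ hx, hx.1.2⟩
      · exact convexHull_min (fun x hx => hx.1) (convex_convexHull ℝ _)

lemma delta4_canonical : IsCanonicalSub Delta4 := by
  constructor
  · refine ⟨Set.Subset.rfl, Set.Subset.antisymm ?_ ?_⟩
    · apply convexHull_mono
      intro x hx
      refine ⟨subset_convexHull ℝ _ hx, ?_⟩
      simp only [Set.mem_insert_iff, Set.mem_singleton_iff] at hx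
      rcases hx with rfl | rfl | rfl | rfl
      · intro i; fin_cases i <;> exact ⟨0, by norm_num⟩
      · intro i; fin_cases i
        · exact ⟨4, by norm_num⟩
        · exact ⟨0, by norm_num⟩
        · exact ⟨0, by norm_num⟩
      · intro i; fin_cases i
        · exact ⟨0, by norm_num⟩
        · exact ⟨4, by norm_num⟩
        · exact ⟨0, by norm_num⟩
      · intro i; fin_cases i
        · exact ⟨0, by norm_num⟩
        · exact ⟨0, by norm_num⟩
        · exact ⟨4, by norm_num⟩
    · exact convexHull_min (fun x hx => hx.1) delta4_convex
  · -- interior point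
    set U : Set (Fin 3 → ℝ) :=
      {x | 0 < x 0} ∩ {x | 0 < x 1} ∩ {x | 0 < x 2} ∩ {x | x 0 + x 1 + x 2 < 4} with hU
    have hUopen : IsOpen U := by
      apply IsOpen.inter
      apply IsOpen.inter
      apply IsOpen.inter
      · exact isOpen_lt continuous_const (continuous_apply 0)
      · exact isOpen_lt continuous_const (continuous_apply 1)
      · exact isOpen_lt continuous_const (continuous_apply 2)
      · exact isOpen_lt (((continuous_apply 0).add (continuous_apply 1)).add
          (continuous_apply 2)) continuous_const
    have hUsub : U ⊆ Delta4 := by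
      rintro x ⟨⟨⟨h0, h1⟩, h2⟩, h3⟩
      simp only [Set.mem_setOf_eq] at h0 h1 h2 h3
      set w : Fin 4 → ℝ := ![1 - (x 0 + x 1 + x 2)/4, x 0 / 4, x 1 / 4, x 2 / 4] with hw
      set z : Fin 4 → (Fin 3 → ℝ) := ![![0,0,0], ![4,0,0], ![0,4,0], ![0,0,4]] with hz
      have hsum : ∑ i, w i = 1 := by
        simp [hw, Fin.sum_univ_four]; ring
      have hmem : Finset.univ.centerMass w z ∈ Delta4 := by
        apply Finset.centerMass_mem_convexHull
        · intro i _
          fin_cases i <;> simp [hw] <;> linarith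
        · rw [hsum]; norm_num
        · intro i _
          fin_cases i <;> simp [hz]
      have hx : Finset.univ.centerMass w z = x := by
        rw [Finset.centerMass_eq_of_sum_1 _ _ hsum]
        rw [Fin.sum_univ_four]
        funext j
        fin_cases j <;> simp [hw, hz]
      rwa [hx] at hmem
    have hpU : pOne ∈ U := by
      refine ⟨⟨⟨?_, ?_⟩, ?_⟩, ?_⟩ <;> norm_num [pOne, Matrix.cons_val_two, Matrix.vecHead, Matrix.vecTail]
    exact interior_maximal hUsub hUopen hpU

theorem stmt15 :
    (∀ P Q : Set (Fin 3 → ℝ), IsCanonicalSub P → IsCanonicalSub Q → P ⊆ Q → P ≠ Q →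
      ∃ v ∈ Set.extremePoints ℝ Q, v ∉ P ∧
        P ⊆ convexHull ℝ ((Q ∩ latticePts) \ {v}) ∧
        pOne ∈ interior (convexHull ℝ ((Q ∩ latticePts) \ {v})) ∧
        IsCanonicalSub (convexHull ℝ ((Q ∩ latticePts) \ {v}))) ∧
    (∀ P : Set (Fin 3 → ℝ), IsCanonicalSub P →
      Relation.ReflTransGen RemoveStep Delta4 P) := by
  constructor
  · exact keyLemma
  · -- reachability, by strong induction on the number of lattice points
    have aux : ∀ n : ℕ, ∀ P Q : Set (Fin 3 → ℝ), IsCanonicalSub P → IsCanonicalSub Q →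
        P ⊆ Q → (Q ∩ latticePts).ncard ≤ n → Relation.ReflTransGen RemoveStep Q P := by
      intro n
      induction n with
      | zero =>
        intro P Q hP hQ hPQ hcard
        exfalso
        have hfin : (Q ∩ latticePts).Finite := lat_finite hQ.1.1
        have hmem : pOne ∈ Q ∩ latticePts :=
          ⟨interior_subset hQ.2, pOne_lat⟩
        have : (Q ∩ latticePts).ncard = 0 := Nat.le_zero.mp hcard
        rw [Set.ncard_eq_zero hfin] at this
        rw [this] at hmem
        exact hmem
      | succ n ih =>
        intro P Q hP hQ hPQ hcard
        by_cases h : P = Q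
        · rw [h]
        · obtain ⟨v, hv, hvP, hPsub, hint, hcan⟩ := keyLemma P Q hP hQ hPQ h
          set Q' := convexHull ℝ ((Q ∩ latticePts) \ {v}) with hQ'
          have hQconv : Convex ℝ Q := by rw [hQ.1.2]; exact convex_convexHull ℝ _
          have hQ'subQ : Q' ⊆ Q := by
            rw [hQ']
            exact convexHull_min (fun x hx => hx.1.1) hQconv
          have hvlat : v ∈ Q ∩ latticePts := by
            have hv' := hv
            rw [hQ.1.2] at hv'
            exact extremePoints_convexHull_subset hv'
          have hvQ' : v ∉ Q' := by
            intro hvmem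
            have hext : v ∈ Set.extremePoints ℝ Q' :=
              ⟨hvmem, fun x1 h1 x2 h2 hseg => hv.2 (hQ'subQ h1) (hQ'subQ h2) hseg⟩
            rw [hQ'] at hext
            exact (extremePoints_convexHull_subset hext).2 rfl
          have hssub : Q' ∩ latticePts ⊂ Q ∩ latticePts := by
            constructor
            · exact Set.inter_subset_inter_left _ hQ'subQ
            · intro hcontra
              exact hvQ' (hcontra hvlat).1
          have hfin : (Q ∩ latticePts).Finite := lat_finite hQ.1.1
          have hlt : (Q' ∩ latticePts).ncard < (Q ∩ latticePts).ncard :=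
            Set.ncard_lt_ncard hssub hfin
          have hle : (Q' ∩ latticePts).ncard ≤ n := by omega
          exact Relation.ReflTransGen.head ⟨v, hv, rfl, hint⟩ (ih P Q' hP hcan hPsub hle)
    intro P hP
    exact aux _ P Delta4 hP delta4_canonical hP.1.1 le_rfl
end
end
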